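/- Let λ > 0 and let X = ∏_{i=1}^∞ min{∑_{k=1}^i E_k, 1} where E_1, E_2, … are i.i.d. Exp(λ). Then E[X] = e^{-λ/2} and Var(X) = e^{-2λ/3} - e^{-λ}. -/

import Mathlib

open MeasureTheory ProbabilityTheory Real Set Filter Topology
open scoped ENNReal NNReal

noncomputable section

namespace Stmt2Aux

/-- clamp to `[0,1]` -/
def cl (t : ℝ) : ℝ := min (max t 0) 1

lemma cl_nonneg (t : ℝ) : 0 ≤ cl t := le_min (le_max_right _ _) zero_le_one

lemma cl_le_one (t : ℝ) : cl t ≤ 1 := min_le_right _ _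

lemma cl_of_mem {t : ℝ} (h0 : 0 ≤ t) (h1 : t ≤ 1) : cl t = t := by
  simp [cl, max_eq_left h0, min_eq_left h1]

lemma cl_of_ge {t : ℝ} (h : 1 ≤ t) : cl t = 1 := by
  rw [cl, max_eq_left (le_trans zero_le_one h), min_eq_right h]

lemma continuous_cl : Continuous cl := (continuous_id.max continuous_const).min continuous_const

lemma measurable_cl : Measurable cl := continuous_cl.measurable

lemma expMeasure_eq_withDensity (r : ℝ) :
    expMeasure r = volume.withDensity
      (fun x => ((exponentialPDFReal r x).toNNReal : ℝ≥0∞)) := rfl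

lemma exponentialPDFReal_eq' (r x : ℝ) :
    exponentialPDFReal r x = if 0 ≤ x then r * rexp (-(r * x)) else 0 := by
  rw [exponentialPDFReal, gammaPDFReal]
  simp only [rpow_one, Real.Gamma_one, div_one, sub_self, rpow_zero, mul_one]

lemma integral_expMeasure_eq {lam : ℝ} (hlam : 0 < lam) (K : ℝ → ℝ) :
    ∫ x, K x ∂(expMeasure lam)
      = ∫ x in Set.Ioi (0:ℝ), lam * Real.exp (-(lam * x)) * K x := by
  rw [expMeasure_eq_withDensity,
    integral_withDensity_eq_integral_smul ((measurable_exponentialPDFReal lam).real_toNNReal)]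
  have h1 : ∀ x : ℝ, (exponentialPDFReal lam x).toNNReal • K x
      = Set.indicator (Set.Ici (0:ℝ)) (fun x => lam * Real.exp (-(lam * x)) * K x) x := by
    intro x
    rw [NNReal.smul_def, smul_eq_mul]
    by_cases hx : 0 ≤ x
    · rw [Set.indicator_of_mem (Set.mem_Ici.mpr hx), Real.coe_toNNReal _ ?_, exponentialPDFReal_eq', if_pos hx]
      rw [exponentialPDFReal_eq', if_pos hx]
      positivity
    · rw [Set.indicator_of_notMem (fun h => hx (Set.mem_Ici.mp h)), exponentialPDFReal_eq', if_neg hx]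
      simp
  simp_rw [h1]
  rw [integral_indicator measurableSet_Ici, integral_Ici_eq_integral_Ioi]
section KeyIntegral

variable {lam : ℝ}

lemma abs_mul_le_one {a b : ℝ} (ha0 : 0 ≤ a) (ha1 : a ≤ 1) (hb0 : 0 ≤ b) (hb1 : b ≤ 1) :
    |a * b| ≤ 1 := by
  rw [abs_of_nonneg (mul_nonneg ha0 hb0)]
  calc a * b ≤ 1 * 1 := mul_le_mul ha1 hb1 hb0 zero_le_one
    _ = 1 := by norm_num

lemma key_integral (hlam : 0 < lam) (f g : ℝ → ℝ)
    (hfm : Measurable f) (hgc : Continuous g)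
    (hf0 : ∀ t, 0 ≤ f t) (hf1 : ∀ t, f t ≤ 1)
    (hg0 : ∀ t, 0 ≤ g t) (hg1 : ∀ t, g t ≤ 1)
    (hgd : ∀ t, 0 < t → HasDerivAt g (lam * (1 - f t) * g t) t)
    (s : ℝ) (hs : 0 ≤ s) :
    ∫ x, f (s + x) * g (s + x) ∂(expMeasure lam) = g s := by
  rw [integral_expMeasure_eq hlam]
  have hexp : ∀ x : ℝ, HasDerivAt (fun y => Real.exp (-(lam * y)))
      (Real.exp (-(lam * x)) * (-lam)) x := by
    intro x
    have h := (((hasDerivAt_id x).const_mul lam).neg).exp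
    convert h using 1 <;> simp
  have hF : ∀ x ∈ Set.Ioi (0:ℝ), HasDerivAt (fun y => -(Real.exp (-(lam * y)) * g (s + y)))
      (lam * Real.exp (-(lam * x)) * (f (s + x) * g (s + x))) x := by
    intro x hx
    have hx' : (0:ℝ) < x := hx
    have hsx : (0:ℝ) < s + x := by linarith
    have h2 : HasDerivAt (fun y => g (s + y)) (lam * (1 - f (s + x)) * g (s + x)) x :=
      (hgd (s + x) hsx).comp_const_add s x
    have h3 := ((hexp x).mul h2).neg
    refine h3.congr_deriv (Eq.symm ?_)
    ring
  have hcont : ContinuousWithinAt (fun y : ℝ => -(Real.exp (-(lam * y)) * g (s + y)))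
      (Set.Ici 0) 0 := by
    have h1 : Continuous (fun y : ℝ => Real.exp (-(lam * y))) :=
      ((continuous_const.mul continuous_id).neg).rexp
    exact (((h1.mul (hgc.comp (continuous_const.add continuous_id)))).neg).continuousWithinAt
  have hintexp : IntegrableOn (fun x : ℝ => Real.exp (-(lam * x))) (Set.Ioi (0:ℝ)) := by
    have h := exp_neg_integrableOn_Ioi 0 hlam
    simpa [neg_mul] using h
  have hint : IntegrableOn
      (fun x => lam * Real.exp (-(lam * x)) * (f (s + x) * g (s + x))) (Set.Ioi (0:ℝ)) := by
    refine Integrable.mono' (hintexp.const_mul lam) ?_ ?_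
    · exact ((((measurable_const.mul
        ((measurable_const.mul measurable_id).neg.exp)).mul
        ((hfm.comp (measurable_const.add measurable_id)).mul
          (hgc.measurable.comp (measurable_const.add measurable_id))))).aestronglyMeasurable)
    · refine Filter.Eventually.of_forall fun x => ?_
      have hb : |f (s + x) * g (s + x)| ≤ 1 :=
        abs_mul_le_one (hf0 _) (hf1 _) (hg0 _) (hg1 _)
      rw [norm_mul, Real.norm_eq_abs, Real.norm_eq_abs, abs_mul, abs_of_nonneg hlam.le,
        abs_of_nonneg (Real.exp_pos _).le]
      calc lam * Real.exp (-(lam * x)) * |f (s + x) * g (s + x)|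
          ≤ lam * Real.exp (-(lam * x)) * 1 := by
            apply mul_le_mul_of_nonneg_left hb; positivity
        _ = lam * Real.exp (-(lam * x)) := by ring
  have htend : Filter.Tendsto (fun y : ℝ => -(Real.exp (-(lam * y)) * g (s + y)))
      Filter.atTop (𝓝 0) := by
    have h0 : Filter.Tendsto (fun y : ℝ => Real.exp (-(lam * y)) * g (s + y))
        Filter.atTop (𝓝 0) := by
      apply squeeze_zero_norm (a := fun y : ℝ => Real.exp (-(lam * y)))
      · intro y
        rw [norm_mul, Real.norm_eq_abs, Real.norm_eq_abs, abs_of_nonneg (Real.exp_pos _).le]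
        calc Real.exp (-(lam * y)) * |g (s + y)| ≤ Real.exp (-(lam * y)) * 1 := by
              apply mul_le_mul_of_nonneg_left _ (Real.exp_pos _).le
              rw [abs_of_nonneg (hg0 _)]; exact hg1 _
          _ = Real.exp (-(lam * y)) := by ring
      · have h1 : Filter.Tendsto (fun y : ℝ => lam * y) Filter.atTop Filter.atTop :=
          Filter.Tendsto.const_mul_atTop hlam Filter.tendsto_id
        exact Real.tendsto_exp_neg_atTop_nhds_zero.comp h1
    have := h0.neg
    rwa [neg_zero] at this
  have hFTC := integral_Ioi_of_hasDerivAt_of_tendsto hcont hF hint htend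
  rw [hFTC]
  simp

end KeyIntegral
section Cases

variable (lam : ℝ)

/-- first case: `f = min(t,1)` clamped -/
def f1 : ℝ → ℝ := fun t => cl t

def g1 : ℝ → ℝ := fun t => Real.exp (-(lam * (1 - cl t) ^ 2 / 2))

/-- second case: `f = min(t,1)^2` clamped -/
def f2 : ℝ → ℝ := fun t => (cl t) ^ 2

def g2 : ℝ → ℝ := fun t => Real.exp (-(lam * (2/3 - cl t + (cl t) ^ 3 / 3)))

variable {lam}

lemma f1_mem (t : ℝ) : 0 ≤ f1 t ∧ f1 t ≤ 1 := ⟨cl_nonneg t, cl_le_one t⟩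
lemma f2_mem (t : ℝ) : 0 ≤ f2 t ∧ f2 t ≤ 1 := by
  unfold f2
  constructor
  · positivity
  · have h1 := cl_nonneg t; have h2 := cl_le_one t
    nlinarith

lemma f1_meas : Measurable f1 := measurable_cl
lemma f2_meas : Measurable f2 := measurable_cl.pow_const 2

lemma g1_cont : Continuous (g1 lam) :=
  ((continuous_const.mul ((continuous_const.sub continuous_cl).pow 2)).div_const 2).neg.rexp

lemma g2_cont : Continuous (g2 lam) :=
  ((continuous_const.mul ((continuous_const.sub continuous_cl).add
    ((continuous_cl.pow 3).div_const 3))).neg).rexp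

lemma g1_mem (hlam : 0 < lam) (t : ℝ) : 0 ≤ g1 lam t ∧ g1 lam t ≤ 1 := by
  refine ⟨(Real.exp_pos _).le, Real.exp_le_one_iff.mpr ?_⟩
  have : 0 ≤ lam * (1 - cl t) ^ 2 / 2 := by positivity
  linarith

lemma g2_mem (hlam : 0 < lam) (t : ℝ) : 0 ≤ g2 lam t ∧ g2 lam t ≤ 1 := by
  refine ⟨(Real.exp_pos _).le, Real.exp_le_one_iff.mpr ?_⟩
  have h1 := cl_nonneg t; have h2 := cl_le_one t
  have hr : 0 ≤ 2/3 - cl t + (cl t) ^ 3 / 3 := by nlinarith [sq_nonneg (1 - cl t), sq_nonneg (cl t)]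
  have := mul_nonneg hlam.le hr
  linarith

lemma f1_of_ge {t : ℝ} (h : 1 ≤ t) : f1 t = 1 := by rw [f1, cl_of_ge h]
lemma f2_of_ge {t : ℝ} (h : 1 ≤ t) : f2 t = 1 := by rw [f2, cl_of_ge h]; norm_num
lemma g1_of_ge {t : ℝ} (h : 1 ≤ t) : g1 lam t = 1 := by
  rw [g1, cl_of_ge h]; norm_num
lemma g2_of_ge {t : ℝ} (h : 1 ≤ t) : g2 lam t = 1 := by
  rw [g2, cl_of_ge h]; norm_num

lemma g1_zero : g1 lam 0 = Real.exp (-lam / 2) := by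
  rw [g1, cl_of_mem le_rfl zero_le_one]
  norm_num [neg_div]

lemma g2_zero : g2 lam 0 = Real.exp (-(2 * lam) / 3) := by
  rw [g2, cl_of_mem le_rfl zero_le_one]
  ring_nf

-- smooth versions
lemma hG1 (y : ℝ) : HasDerivAt (fun y : ℝ => Real.exp (-(lam * (1 - y) ^ 2 / 2)))
    (lam * (1 - y) * Real.exp (-(lam * (1 - y) ^ 2 / 2))) y := by
  have h := (((((hasDerivAt_id y).const_sub 1).pow 2).const_mul lam).div_const 2).neg.exp
  refine h.congr_deriv (Eq.symm ?_)
  simp only [id_eq, pow_one]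
  norm_num
  ring

lemma hG2 (y : ℝ) : HasDerivAt (fun y : ℝ => Real.exp (-(lam * (2/3 - y + y ^ 3 / 3))))
    (lam * (1 - y ^ 2) * Real.exp (-(lam * (2/3 - y + y ^ 3 / 3)))) y := by
  have hinner : HasDerivAt (fun y : ℝ => -(lam * (2/3 - y + y ^ 3 / 3)))
      (-(lam * (-1 + 3 * y ^ 2 / 3))) y := by
    have hid := hasDerivAt_id y
    have h1 : HasDerivAt (fun y : ℝ => 2/3 - y + y ^ 3 / 3) (-1 + 3 * y ^ 2 / 3) y := by
      have := (((hasDerivAt_id y).const_sub (2/3 : ℝ)).neg)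
      have hcube := ((hasDerivAt_id y).pow 3).div_const 3
      have hlin : HasDerivAt (fun y : ℝ => 2/3 - y) (-1 : ℝ) y := (hasDerivAt_id y).const_sub (2/3 : ℝ)
      have := hlin.add hcube
      refine this.congr_deriv (Eq.symm ?_)
      simp only [id_eq]
      norm_num
    exact (h1.const_mul lam).neg
  have h := hinner.exp
  convert h using 1
  ring

lemma g1_deriv (t : ℝ) (ht : 0 < t) :
    HasDerivAt (g1 lam) (lam * (1 - f1 t) * g1 lam t) t := by
  rcases lt_trichotomy t 1 with h1 | h1 | h1
  · have hev : g1 lam =ᶠ[𝓝 t] (fun y : ℝ => Real.exp (-(lam * (1 - y) ^ 2 / 2))) := by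
      filter_upwards [Ioo_mem_nhds ht h1] with y hy
      rw [g1, cl_of_mem hy.1.le hy.2.le]
    have := (hG1 t).congr_of_eventuallyEq hev
    refine this.congr_deriv (Eq.symm ?_)
    rw [g1, f1, cl_of_mem ht.le h1.le]
  · subst h1
    have hIic : HasDerivWithinAt (g1 lam) 0 (Set.Iic 1) 1 := by
      have hG := (hG1 (lam := lam) 1).hasDerivWithinAt (s := Set.Iic 1)
      have hG' : HasDerivWithinAt (fun y : ℝ => Real.exp (-(lam * (1 - y) ^ 2 / 2)))
          0 (Set.Iic 1) 1 := by
        refine hG.congr_deriv (Eq.symm ?_)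
        norm_num
      refine hG'.congr_of_eventuallyEq ?_ ?_
      · have hmem : Set.Ioi (0:ℝ) ∩ Set.Iic 1 ∈ 𝓝[Set.Iic 1] (1:ℝ) :=
          Filter.inter_mem (nhdsWithin_le_nhds (Ioi_mem_nhds one_pos)) self_mem_nhdsWithin
        filter_upwards [hmem] with y hy
        rw [g1, cl_of_mem hy.1.le hy.2]
      · rw [g1, cl_of_ge le_rfl]
    have hIci : HasDerivWithinAt (g1 lam) 0 (Set.Ici 1) 1 := by
      refine (hasDerivWithinAt_const (1:ℝ) (Set.Ici 1) (1:ℝ)).congr ?_ ?_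
      · intro y hy; rw [g1_of_ge hy]
      · rw [g1_of_ge le_rfl]
    have := hIic.union hIci
    rw [Set.Iic_union_Ici] at this
    have hda := hasDerivWithinAt_univ.mp this
    refine hda.congr_deriv (Eq.symm ?_)
    rw [f1, cl_of_ge le_rfl]
    ring
  · have hev : g1 lam =ᶠ[𝓝 t] (fun _ : ℝ => (1:ℝ)) := by
      filter_upwards [Ioi_mem_nhds h1] with y hy
      rw [g1_of_ge (le_of_lt hy)]
    have := (hasDerivAt_const t (1:ℝ)).congr_of_eventuallyEq hev
    refine this.congr_deriv (Eq.symm ?_)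
    rw [f1, cl_of_ge h1.le]
    ring

lemma g2_deriv (t : ℝ) (ht : 0 < t) :
    HasDerivAt (g2 lam) (lam * (1 - f2 t) * g2 lam t) t := by
  rcases lt_trichotomy t 1 with h1 | h1 | h1
  · have hev : g2 lam =ᶠ[𝓝 t] (fun y : ℝ => Real.exp (-(lam * (2/3 - y + y ^ 3 / 3)))) := by
      filter_upwards [Ioo_mem_nhds ht h1] with y hy
      rw [g2, cl_of_mem hy.1.le hy.2.le]
    have := (hG2 t).congr_of_eventuallyEq hev
    refine this.congr_deriv (Eq.symm ?_)
    rw [g2, f2, cl_of_mem ht.le h1.le]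
  · subst h1
    have hIic : HasDerivWithinAt (g2 lam) 0 (Set.Iic 1) 1 := by
      have hG := (hG2 (lam := lam) 1).hasDerivWithinAt (s := Set.Iic 1)
      have hG' : HasDerivWithinAt (fun y : ℝ => Real.exp (-(lam * (2/3 - y + y ^ 3 / 3))))
          0 (Set.Iic 1) 1 := by
        refine hG.congr_deriv (Eq.symm ?_)
        norm_num
      refine hG'.congr_of_eventuallyEq ?_ ?_
      · have hmem : Set.Ioi (0:ℝ) ∩ Set.Iic 1 ∈ 𝓝[Set.Iic 1] (1:ℝ) :=
          Filter.inter_mem (nhdsWithin_le_nhds (Ioi_mem_nhds one_pos)) self_mem_nhdsWithin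
        filter_upwards [hmem] with y hy
        rw [g2, cl_of_mem hy.1.le hy.2]
      · rw [g2, cl_of_ge le_rfl]
    have hIci : HasDerivWithinAt (g2 lam) 0 (Set.Ici 1) 1 := by
      refine (hasDerivWithinAt_const (1:ℝ) (Set.Ici 1) (1:ℝ)).congr ?_ ?_
      · intro y hy; rw [g2_of_ge hy]
      · rw [g2_of_ge le_rfl]
    have := hIic.union hIci
    rw [Set.Iic_union_Ici] at this
    have hda := hasDerivWithinAt_univ.mp this
    refine hda.congr_deriv (Eq.symm ?_)
    rw [f2, cl_of_ge le_rfl]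
    norm_num
  · have hev : g2 lam =ᶠ[𝓝 t] (fun _ : ℝ => (1:ℝ)) := by
      filter_upwards [Ioi_mem_nhds h1] with y hy
      rw [g2_of_ge (le_of_lt hy)]
    have := (hasDerivAt_const t (1:ℝ)).congr_of_eventuallyEq hev
    refine this.congr_deriv (Eq.symm ?_)
    rw [f2, cl_of_ge h1.le]
    ring

end Cases
section Main

variable {Ω : Type*} [MeasurableSpace Ω] (P : Measure Ω) [IsProbabilityMeasure P]

lemma aux_main (lam : ℝ) (hlam : 0 < lam)
    (E : ℕ → Ω → ℝ) (hEmeas : ∀ i, Measurable (E i))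
    (hEindep : iIndepFun E P)
    (hEdist : ∀ i, P.map (E i) = expMeasure lam)
    (f g : ℝ → ℝ) (hfm : Measurable f) (hgm : Measurable g)
    (hf0 : ∀ t, 0 ≤ f t) (hf1 : ∀ t, f t ≤ 1) (hfe : ∀ t, 1 ≤ t → f t = 1)
    (hg0 : ∀ t, 0 ≤ g t) (hg1 : ∀ t, g t ≤ 1) (hge : ∀ t, 1 ≤ t → g t = 1)
    (hkey : ∀ s, 0 ≤ s → ∫ x, f (s + x) * g (s + x) ∂(expMeasure lam) = g s) :
    ∫ ω, (∏' i : ℕ, f (∑ k ∈ Finset.range (i + 1), E k ω)) ∂P = g 0 := by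
  classical
  set T : ℕ → Ω → ℝ := fun n ω => ∑ k ∈ Finset.range n, E k ω with hTdef
  have hTmeas : ∀ n, Measurable (T n) :=
    fun n => Finset.measurable_sum _ (fun i _ => hEmeas i)
  set M : ℕ → Ω → ℝ := fun n ω => (∏ i ∈ Finset.range n, f (T (i + 1) ω)) * g (T n ω) with hMdef
  have hMmeas : ∀ n, Measurable (M n) := fun n =>
    (Finset.measurable_prod _ (fun i _ => hfm.comp (hTmeas (i + 1)))).mul (hgm.comp (hTmeas n))
  -- a.e. nonnegativity of E i
  have hEnn : ∀ᵐ ω ∂P, ∀ i, 0 ≤ E i ω := by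
    rw [MeasureTheory.ae_all_iff]
    intro i
    have h0 : P (E i ⁻¹' Set.Iio 0) = 0 := by
      rw [← Measure.map_apply (hEmeas i) measurableSet_Iio, hEdist i,
        expMeasure_eq_withDensity, withDensity_apply _ measurableSet_Iio]
      have := lintegral_exponentialPDF_of_nonpos (le_refl (0:ℝ)) (r := lam)
      exact this
    rw [MeasureTheory.ae_iff]
    convert h0 using 2
    ext ω
    simp [Set.mem_Iio, not_le]
  -- every integral of M n equals g 0
  have hMint : ∀ n, ∫ ω, M n ω ∂P = g 0 := by
    intro n
    induction n with
    | zero =>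
      simp only [hMdef, hTdef, Finset.range_zero, Finset.prod_empty, Finset.sum_empty, one_mul]
      simp
    | succ n ih =>
      set S : Finset ℕ := Finset.range n with hSdef
      set W : Ω → ({x // x ∈ S} → ℝ) := fun ω i => E i.1 ω with hWdef
      have hWmeas : Measurable W := measurable_pi_lambda _ fun i => hEmeas i.1
      set ext : ({x // x ∈ S} → ℝ) → ℕ → ℝ :=
        fun v k => if h : k ∈ S then v ⟨k, h⟩ else 0 with hextdef
      have hextmeas : ∀ k, Measurable fun v => ext v k := by
        intro k
        by_cases h : k ∈ S
        · simpa [hextdef, h] using measurable_pi_apply (⟨k, h⟩ : {x // x ∈ S})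
        · simpa [hextdef, h] using measurable_const
      set ψ : ({x // x ∈ S} → ℝ) → ℝ := fun v => ∑ k ∈ Finset.range n, ext v k with hψdef
      set Φ : ({x // x ∈ S} → ℝ) → ℝ :=
        fun v => ∏ i ∈ Finset.range n, f (∑ k ∈ Finset.range (i + 1), ext v k) with hΦdef
      have hψmeas : Measurable ψ := Finset.measurable_sum _ fun k _ => hextmeas k
      have hΦmeas : Measurable Φ := Finset.measurable_prod _ fun i _ =>
        hfm.comp (Finset.measurable_sum _ fun k _ => hextmeas k)
      have hext_W : ∀ (ω) (k : ℕ), k < n → ext (W ω) k = E k ω := by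
        intro ω k hk
        have hkS : k ∈ S := by simpa [hSdef] using Finset.mem_range.mpr hk
        simp [hextdef, hkS, hWdef]
      have hψW : ∀ ω, ψ (W ω) = T n ω := by
        intro ω
        exact Finset.sum_congr rfl fun k hk => hext_W ω k (Finset.mem_range.mp hk)
      have hΦW : ∀ ω, Φ (W ω) = ∏ i ∈ Finset.range n, f (T (i + 1) ω) := by
        intro ω
        refine Finset.prod_congr rfl fun i hi => ?_
        congr 1
        refine Finset.sum_congr rfl fun k hk => hext_W ω k ?_
        have h1 := Finset.mem_range.mp hk
        have h2 := Finset.mem_range.mp hi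
        omega
      have hΦ0 : ∀ v, 0 ≤ Φ v := fun v => Finset.prod_nonneg fun i _ => hf0 _
      have hΦ1 : ∀ v, Φ v ≤ 1 := fun v =>
        Finset.prod_le_one (fun i _ => hf0 _) (fun i _ => hf1 _)
      have hIndep : IndepFun W (E n) P := by
        have h := hEindep.indepFun_finset S {n}
          (by simp only [hSdef, Finset.disjoint_left, Finset.mem_range, Finset.mem_singleton]; omega) hEmeas
        have h2 := h.comp (measurable_id : Measurable (fun v : {x // x ∈ S} → ℝ => v))
          (measurable_pi_apply (⟨n, Finset.mem_singleton_self n⟩ : {x // x ∈ ({n} : Finset ℕ)}))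
        exact h2
      have hmap : P.map (fun ω => (W ω, E n ω)) = (P.map W).prod (P.map (E n)) :=
        (indepFun_iff_map_prod_eq_prod_map_map hWmeas.aemeasurable
          (hEmeas n).aemeasurable).mp hIndep
      haveI : IsProbabilityMeasure (P.map W) := Measure.isProbabilityMeasure_map hWmeas.aemeasurable
      haveI : IsProbabilityMeasure (P.map (E n)) :=
        Measure.isProbabilityMeasure_map (hEmeas n).aemeasurable
      set H : ({x // x ∈ S} → ℝ) × ℝ → ℝ :=
        fun p => Φ p.1 * (f (ψ p.1 + p.2) * g (ψ p.1 + p.2)) with hHdef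
      have hHmeas : Measurable H := by
        have hsum : Measurable (fun p : ({x // x ∈ S} → ℝ) × ℝ => ψ p.1 + p.2) :=
          (hψmeas.comp measurable_fst).add measurable_snd
        exact (hΦmeas.comp measurable_fst).mul ((hfm.comp hsum).mul (hgm.comp hsum))
      have hHbound : ∀ p, ‖H p‖ ≤ 1 := by
        intro p
        rw [Real.norm_eq_abs, hHdef]
        have h1 : |Φ p.1| ≤ 1 := by rw [abs_of_nonneg (hΦ0 _)]; exact hΦ1 _
        have h2 : |f (ψ p.1 + p.2) * g (ψ p.1 + p.2)| ≤ 1 :=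
          abs_mul_le_one (hf0 _) (hf1 _) (hg0 _) (hg1 _)
        calc |Φ p.1 * (f (ψ p.1 + p.2) * g (ψ p.1 + p.2))|
            = |Φ p.1| * |f (ψ p.1 + p.2) * g (ψ p.1 + p.2)| := abs_mul _ _
          _ ≤ 1 * 1 := mul_le_mul h1 h2 (abs_nonneg _) zero_le_one
          _ = 1 := by norm_num
      have step1 : ∫ ω, M (n + 1) ω ∂P = ∫ ω, H (W ω, E n ω) ∂P := by
        refine integral_congr_ae (Filter.Eventually.of_forall fun ω => ?_)
        show M (n + 1) ω = H (W ω, E n ω)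
        have hTsucc : T (n + 1) ω = T n ω + E n ω := Finset.sum_range_succ _ n
        simp only [hMdef, hHdef, hψW, hΦW, hTsucc]
        rw [Finset.prod_range_succ]
        have : T n ω + E n ω = T (n+1) ω := (Finset.sum_range_succ _ n).symm
        ring_nf
        rw [add_comm 1 n, hTsucc]
        ring
      have hHint : Integrable H ((P.map W).prod (P.map (E n))) :=
        (integrable_const (1 : ℝ)).mono' hHmeas.aestronglyMeasurable
          (Filter.Eventually.of_forall hHbound)
      have step2 : ∫ ω, H (W ω, E n ω) ∂P = ∫ p, H p ∂((P.map W).prod (P.map (E n))) := by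
        rw [← hmap, integral_map (hWmeas.aemeasurable.prodMk (hEmeas n).aemeasurable)
          hHmeas.aestronglyMeasurable]
      have step3 : ∫ p, H p ∂((P.map W).prod (P.map (E n)))
          = ∫ v, ∫ x, H (v, x) ∂(P.map (E n)) ∂(P.map W) := integral_prod _ hHint
      have hae : ∀ᵐ v ∂(P.map W), 0 ≤ ψ v := by
        rw [MeasureTheory.ae_map_iff hWmeas.aemeasurable
          (measurableSet_le measurable_const hψmeas)]
        filter_upwards [hEnn] with ω hω
        rw [hψW]
        exact Finset.sum_nonneg fun k _ => hω k
      have step4 : ∫ v, ∫ x, H (v, x) ∂(P.map (E n)) ∂(P.map W)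
          = ∫ v, Φ v * g (ψ v) ∂(P.map W) := by
        refine integral_congr_ae (hae.mono fun v hv => ?_)
        rw [hEdist n]
        simp only [hHdef]
        rw [MeasureTheory.integral_const_mul, hkey (ψ v) hv]
      have step5 : ∫ v, Φ v * g (ψ v) ∂(P.map W) = ∫ ω, M n ω ∂P := by
        have hmeas5 : Measurable fun v => Φ v * g (ψ v) := hΦmeas.mul (hgm.comp hψmeas)
        rw [integral_map hWmeas.aemeasurable hmeas5.aestronglyMeasurable]
        refine integral_congr_ae (Filter.Eventually.of_forall fun ω => ?_)
        simp only [hMdef, hψW, hΦW]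
      rw [step1, step2, step3, step4, step5, ih]
  -- the event that some `E i` is at least 1
  have hbig : ∀ᵐ ω ∂P, ∃ i, 1 ≤ E i ω := by
    set c : ℝ≥0∞ := expMeasure lam (Set.Iio 1) with hcdef
    have hc1 : c < 1 := by
      have hIic : expMeasure lam (Set.Iic 1) = ENNReal.ofReal (1 - Real.exp (-(lam * 1))) := by
        rw [expMeasure_eq_withDensity, withDensity_apply _ measurableSet_Iic]
        have := lintegral_exponentialPDF_eq_antiDeriv hlam 1
        rw [if_pos zero_le_one] at this
        exact this
      calc c ≤ expMeasure lam (Set.Iic 1) := measure_mono Set.Iio_subset_Iic_self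
        _ = ENNReal.ofReal (1 - Real.exp (-(lam * 1))) := hIic
        _ < 1 := by
          have hexp1 : Real.exp (-(lam * 1)) < 1 := by
            rw [Real.exp_lt_one_iff]
            linarith
          rw [← ENNReal.ofReal_one]
          exact (ENNReal.ofReal_lt_ofReal_iff_of_nonneg (by linarith)).mpr
            (by linarith [Real.exp_pos (-(lam * 1))])
    have hpre : ∀ i : ℕ, P (E i ⁻¹' Set.Iio 1) = c := by
      intro i
      rw [← Measure.map_apply (hEmeas i) measurableSet_Iio, hEdist i]
    have hcap : ∀ m : ℕ, P (⋂ i ∈ Finset.range m, E i ⁻¹' Set.Iio 1) = c ^ m := by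
      intro m
      rw [hEindep.meas_biInter (fun i _ => ⟨Set.Iio 1, measurableSet_Iio, rfl⟩)]
      simp [hpre]
    have htot : P (⋂ i, E i ⁻¹' Set.Iio 1) = 0 := by
      have hle : ∀ m : ℕ, P (⋂ i, E i ⁻¹' Set.Iio 1) ≤ c ^ m := by
        intro m
        refine le_trans (measure_mono ?_) (le_of_eq (hcap m))
        intro ω hω
        simp only [Set.mem_iInter] at hω ⊢
        intro i _
        exact hω i
      have htendc : Filter.Tendsto (fun m : ℕ => c ^ m) Filter.atTop (𝓝 0) :=
        ENNReal.tendsto_pow_atTop_nhds_zero_of_lt_one hc1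
      have := ge_of_tendsto htendc (Filter.Eventually.of_forall hle)
      exact le_antisymm this zero_le
    rw [MeasureTheory.ae_iff]
    convert htot using 2
    ext ω
    simp [not_exists, not_le]
  -- a.e. convergence of M n to the infinite product
  have hconv : ∀ᵐ ω ∂P, Filter.Tendsto (fun n => M n ω) Filter.atTop
      (𝓝 (∏' i : ℕ, f (T (i + 1) ω))) := by
    filter_upwards [hEnn, hbig] with ω hnn hex
    obtain ⟨i0, hi0⟩ := hex
    set N := i0 + 1 with hNdef
    have hTmono : ∀ m k : ℕ, m ≤ k → T m ω ≤ T k ω := by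
      intro m k hmk
      exact Finset.sum_le_sum_of_subset_of_nonneg
        (Finset.range_subset_range.mpr hmk) (fun i _ _ => hnn i)
    have hTN : 1 ≤ T N ω := by
      have : E i0 ω ≤ T N ω := by
        refine Finset.single_le_sum (fun i _ => hnn i) ?_
        simp [hNdef]
      linarith
    have hTge : ∀ m, N ≤ m → 1 ≤ T m ω := fun m hm => le_trans hTN (hTmono N m hm)
    have hprodN : (∏' i : ℕ, f (T (i + 1) ω)) = ∏ i ∈ Finset.range N, f (T (i + 1) ω) := by
      refine tprod_eq_prod fun i hi => ?_
      have hiN : N ≤ i + 1 := by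
        have := Finset.mem_range.not.mp hi
        omega
      exact hfe _ (hTge _ hiN)
    have hMconst : ∀ m, N ≤ m → M m ω = ∏ i ∈ Finset.range N, f (T (i + 1) ω) := by
      intro m hm
      have hgm1 : g (T m ω) = 1 := hge _ (hTge m hm)
      have hprodm : (∏ i ∈ Finset.range m, f (T (i + 1) ω))
          = ∏ i ∈ Finset.range N, f (T (i + 1) ω) := by
        refine (Finset.prod_subset (Finset.range_subset_range.mpr hm) ?_).symm
        intro i _ hi
        have hiN : N ≤ i + 1 := by
          have := Finset.mem_range.not.mp hi
          omega
        exact hfe _ (hTge _ hiN)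
      simp only [hMdef, hgm1, hprodm, mul_one]
    rw [hprodN]
    refine Filter.Tendsto.congr' ?_ tendsto_const_nhds
    filter_upwards [Filter.eventually_ge_atTop N] with m hm
    exact (hMconst m hm).symm
  -- dominated convergence
  have hdom : Filter.Tendsto (fun n => ∫ ω, M n ω ∂P) Filter.atTop
      (𝓝 (∫ ω, (∏' i : ℕ, f (T (i + 1) ω)) ∂P)) := by
    refine MeasureTheory.tendsto_integral_of_dominated_convergence (fun _ => (1 : ℝ))
      (fun n => (hMmeas n).aestronglyMeasurable) (integrable_const 1) ?_ hconv
    intro n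
    refine Filter.Eventually.of_forall fun ω => ?_
    rw [Real.norm_eq_abs, hMdef]
    have h1 : |∏ i ∈ Finset.range n, f (T (i + 1) ω)| ≤ 1 := by
      rw [abs_of_nonneg (Finset.prod_nonneg fun i _ => hf0 _)]
      exact Finset.prod_le_one (fun i _ => hf0 _) (fun i _ => hf1 _)
    have h2 : |g (T n ω)| ≤ 1 := by rw [abs_of_nonneg (hg0 _)]; exact hg1 _
    calc |(∏ i ∈ Finset.range n, f (T (i + 1) ω)) * g (T n ω)|
        = |∏ i ∈ Finset.range n, f (T (i + 1) ω)| * |g (T n ω)| := abs_mul _ _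
      _ ≤ 1 * 1 := mul_le_mul h1 h2 (abs_nonneg _) zero_le_one
      _ = 1 := by norm_num
  have hconst : Filter.Tendsto (fun n => ∫ ω, M n ω ∂P) Filter.atTop (𝓝 (g 0)) := by
    simp only [hMint]
    exact tendsto_const_nhds
  have heq := tendsto_nhds_unique hdom hconst
  simp only [hTdef] at heq
  exact heq
lemma ae_nonneg (lam : ℝ) (E : ℕ → Ω → ℝ) (hEmeas : ∀ i, Measurable (E i))
    (hEdist : ∀ i, P.map (E i) = expMeasure lam) :
    ∀ᵐ ω ∂P, ∀ i, 0 ≤ E i ω := by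
  rw [MeasureTheory.ae_all_iff]
  intro i
  have h0 : P (E i ⁻¹' Set.Iio 0) = 0 := by
    rw [← Measure.map_apply (hEmeas i) measurableSet_Iio, hEdist i,
      expMeasure_eq_withDensity, withDensity_apply _ measurableSet_Iio]
    have := lintegral_exponentialPDF_of_nonpos (le_refl (0:ℝ)) (r := lam)
    exact this
  rw [MeasureTheory.ae_iff]
  convert h0 using 2
  ext ω
  simp [Set.mem_Iio, not_le]

lemma ae_big (lam : ℝ) (hlam : 0 < lam) (E : ℕ → Ω → ℝ) (hEmeas : ∀ i, Measurable (E i))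
    (hEindep : iIndepFun E P)
    (hEdist : ∀ i, P.map (E i) = expMeasure lam) :
    ∀ᵐ ω ∂P, ∃ i, 1 ≤ E i ω := by
  set c : ℝ≥0∞ := expMeasure lam (Set.Iio 1) with hcdef
  have hc1 : c < 1 := by
    have hIic : expMeasure lam (Set.Iic 1) = ENNReal.ofReal (1 - Real.exp (-(lam * 1))) := by
      rw [expMeasure_eq_withDensity, withDensity_apply _ measurableSet_Iic]
      have := lintegral_exponentialPDF_eq_antiDeriv hlam 1
      rw [if_pos zero_le_one] at this
      exact this
    calc c ≤ expMeasure lam (Set.Iic 1) := measure_mono Set.Iio_subset_Iic_self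
      _ = ENNReal.ofReal (1 - Real.exp (-(lam * 1))) := hIic
      _ < 1 := by
        have hexp1 : Real.exp (-(lam * 1)) < 1 := by
          rw [Real.exp_lt_one_iff]
          linarith
        rw [← ENNReal.ofReal_one]
        exact (ENNReal.ofReal_lt_ofReal_iff_of_nonneg (by linarith)).mpr
          (by linarith [Real.exp_pos (-(lam * 1))])
  have hpre : ∀ i : ℕ, P (E i ⁻¹' Set.Iio 1) = c := by
    intro i
    rw [← Measure.map_apply (hEmeas i) measurableSet_Iio, hEdist i]
  have hcap : ∀ m : ℕ, P (⋂ i ∈ Finset.range m, E i ⁻¹' Set.Iio 1) = c ^ m := by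
    intro m
    rw [hEindep.meas_biInter (fun i _ => ⟨Set.Iio 1, measurableSet_Iio, rfl⟩)]
    simp [hpre]
  have htot : P (⋂ i, E i ⁻¹' Set.Iio 1) = 0 := by
    have hle : ∀ m : ℕ, P (⋂ i, E i ⁻¹' Set.Iio 1) ≤ c ^ m := by
      intro m
      refine le_trans (measure_mono ?_) (le_of_eq (hcap m))
      intro ω hω
      simp only [Set.mem_iInter] at hω ⊢
      intro i _
      exact hω i
    have htendc : Filter.Tendsto (fun m : ℕ => c ^ m) Filter.atTop (𝓝 0) :=
      ENNReal.tendsto_pow_atTop_nhds_zero_of_lt_one hc1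
    have := ge_of_tendsto htendc (Filter.Eventually.of_forall hle)
    exact le_antisymm this zero_le
  rw [MeasureTheory.ae_iff]
  convert htot using 2
  ext ω
  simp [not_exists, not_le]
end Main
end Stmt2Aux

open Stmt2Aux

/-- For `X = ∏_{i=1}^∞ min{∑_{k=1}^i E_k, 1}` with `E_i` i.i.d. `Exp(λ)`:
`E[X] = e^{-λ/2}` and `Var(X) = E[X²] - (E[X])² = e^{-2λ/3} - e^{-λ}`. -/
theorem stmt_2
    {Ω : Type*} [MeasurableSpace Ω] (P : Measure Ω) [IsProbabilityMeasure P]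
    (lam : ℝ) (hlam : 0 < lam)
    (E : ℕ → Ω → ℝ) (hEmeas : ∀ i, Measurable (E i))
    (hEindep : iIndepFun E P)
    (hEdist : ∀ i, P.map (E i) = expMeasure lam)
    (X : Ω → ℝ)
    (hX : ∀ ω, X ω = ∏' i : ℕ, min (∑ k ∈ Finset.range (i + 1), E k ω) 1) :
    (∫ ω, X ω ∂P = Real.exp (-lam / 2)) ∧
    (∫ ω, (X ω) ^ 2 ∂P) - (∫ ω, X ω ∂P) ^ 2 =
      Real.exp (-(2 * lam) / 3) - Real.exp (-lam) := by
  have hEnn := ae_nonneg P lam E hEmeas hEdist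
  have hbig := ae_big P lam hlam E hEmeas hEindep hEdist
  have hX1 : ∫ ω, X ω ∂P = Real.exp (-lam / 2) := by
    have h1 : ∫ ω, X ω ∂P
        = ∫ ω, (∏' i : ℕ, f1 (∑ k ∈ Finset.range (i + 1), E k ω)) ∂P := by
      refine integral_congr_ae ?_
      filter_upwards [hEnn] with ω hω
      rw [hX ω]
      refine tprod_congr fun i => ?_
      have hT0 : 0 ≤ ∑ k ∈ Finset.range (i + 1), E k ω :=
        Finset.sum_nonneg fun k _ => hω k
      rw [f1, cl, max_eq_left hT0]
    rw [h1, aux_main P lam hlam E hEmeas hEindep hEdist f1 (g1 lam) f1_meas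
      (g1_cont).measurable (fun t => (f1_mem t).1) (fun t => (f1_mem t).2)
      (fun t _ht => f1_of_ge _ht)
      (fun t => (g1_mem hlam t).1) (fun t => (g1_mem hlam t).2)
      (fun t _ht => g1_of_ge _ht)
      (fun s hs => key_integral hlam f1 (g1 lam) f1_meas g1_cont
        (fun t => (f1_mem t).1) (fun t => (f1_mem t).2)
        (fun t => (g1_mem hlam t).1) (fun t => (g1_mem hlam t).2)
        g1_deriv s hs), g1_zero]
  have hX2 : ∫ ω, (X ω) ^ 2 ∂P = Real.exp (-(2 * lam) / 3) := by
    have h1 : ∫ ω, (X ω) ^ 2 ∂P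
        = ∫ ω, (∏' i : ℕ, f2 (∑ k ∈ Finset.range (i + 1), E k ω)) ∂P := by
      refine integral_congr_ae ?_
      filter_upwards [hEnn, hbig] with ω hω hex
      obtain ⟨i0, hi0⟩ := hex
      set N := i0 + 1 with hNdef
      have hTmono : ∀ m k : ℕ, m ≤ k →
          (∑ j ∈ Finset.range m, E j ω) ≤ ∑ j ∈ Finset.range k, E j ω := by
        intro m k hmk
        exact Finset.sum_le_sum_of_subset_of_nonneg
          (Finset.range_subset_range.mpr hmk) (fun i _ _ => hω i)
      have hTN : 1 ≤ ∑ j ∈ Finset.range N, E j ω := by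
        have : E i0 ω ≤ ∑ j ∈ Finset.range N, E j ω := by
          refine Finset.single_le_sum (fun i _ => hω i) ?_
          simp [hNdef]
        linarith
      have hTge : ∀ i : ℕ, i ∉ Finset.range N →
          1 ≤ ∑ j ∈ Finset.range (i + 1), E j ω := by
        intro i hi
        have hiN : N ≤ i + 1 := by
          have := Finset.mem_range.not.mp hi
          omega
        exact le_trans hTN (hTmono N (i + 1) hiN)
      have hT0 : ∀ i : ℕ, 0 ≤ ∑ j ∈ Finset.range (i + 1), E j ω :=
        fun i => Finset.sum_nonneg fun k _ => hω k
      have hXfin : X ω = ∏ i ∈ Finset.range N,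
          min (∑ k ∈ Finset.range (i + 1), E k ω) 1 := by
        rw [hX ω]
        refine tprod_eq_prod fun i hi => ?_
        exact min_eq_right (hTge i hi)
      have hffin : (∏' i : ℕ, f2 (∑ k ∈ Finset.range (i + 1), E k ω))
          = ∏ i ∈ Finset.range N, f2 (∑ k ∈ Finset.range (i + 1), E k ω) := by
        refine tprod_eq_prod fun i hi => ?_
        exact f2_of_ge (hTge i hi)
      rw [hXfin, hffin, ← Finset.prod_pow]
      refine Finset.prod_congr rfl fun i _ => ?_
      rw [f2, cl, max_eq_left (hT0 i)]
    rw [h1, aux_main P lam hlam E hEmeas hEindep hEdist f2 (g2 lam) f2_meas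
      (g2_cont).measurable (fun t => (f2_mem t).1) (fun t => (f2_mem t).2)
      (fun t _ht => f2_of_ge _ht)
      (fun t => (g2_mem hlam t).1) (fun t => (g2_mem hlam t).2)
      (fun t _ht => g2_of_ge _ht)
      (fun s hs => key_integral hlam f2 (g2 lam) f2_meas g2_cont
        (fun t => (f2_mem t).1) (fun t => (f2_mem t).2)
        (fun t => (g2_mem hlam t).1) (fun t => (g2_mem hlam t).2)
        g2_deriv s hs), g2_zero]
  refine ⟨hX1, ?_⟩
  rw [hX1, hX2]
  have hsq : Real.exp (-lam / 2) ^ 2 = Real.exp (-lam) := by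
    rw [sq, ← Real.exp_add]
    congr 1
    ring
  rw [hsq]

end
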